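/- Let Λ* be a full-rank lattice in ℝ^d with d ≥ 2, and let M > 0, a > 1. Then the double sum over lattice points w' ∈ Λ* with M/2 < |w'| < M and w ∈ Λ* with M + a ≤ |w| < 2M of |w - w'|^{-(d+1)} is bounded above by C · M^{d-1} · log((a + M/2)/a) for a constant C depending only on the lattice and d. -/

import Mathlib

open MeasureTheory ENNReal

noncomputable section

/-- The lattice point of the full-rank lattice `B ℤ^d` corresponding to `m ∈ ℤ^d`. -/
def latticePoint {d : ℕ} (B : Matrix (Fin d) (Fin d) ℝ) (m : Fin d → ℤ) :
    EuclideanSpace ℝ (Fin d) :=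
  WithLp.toLp 2 (fun i => ∑ j, B i j * (m j : ℝ))

private lemma abs_apply_le_norm {d : ℕ} (x : EuclideanSpace ℝ (Fin d)) (i : Fin d) :
    |x i| ≤ ‖x‖ := by
  rw [EuclideanSpace.norm_eq]
  have h : |x i| = Real.sqrt (‖x i‖ ^ 2) := by
    rw [Real.sqrt_sq_eq_abs, Real.norm_eq_abs, abs_abs]
  rw [h]
  exact Real.sqrt_le_sqrt (Finset.single_le_sum (f := fun j => ‖x j‖ ^ 2)
    (fun j _ => sq_nonneg _) (Finset.mem_univ i))

private lemma latticePoint_sub {d : ℕ} (B : Matrix (Fin d) (Fin d) ℝ) (m m' : Fin d → ℤ) :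
    latticePoint B m - latticePoint B m' = latticePoint B (m - m') := by
  ext i
  simp only [latticePoint, PiLp.sub_apply, PiLp.toLp_apply, Pi.sub_apply, Int.cast_sub, mul_sub]
  rw [Finset.sum_sub_distrib]

private lemma lattice_norm_lb {d : ℕ} (B : Matrix (Fin d) (Fin d) ℝ) (hB : IsUnit B.det) :
    ∃ r : ℝ, 0 < r ∧ r ≤ 1 ∧ ∀ m : Fin d → ℤ, m ≠ 0 → r ≤ ‖latticePoint B m‖ := by
  set A := B⁻¹ with hA
  have hAB : A * B = 1 := Matrix.nonsing_inv_mul B hB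
  set c : ℝ := (∑ i, ∑ j, |A i j|) + 1 with hc
  have hc0 : 0 < c := by
    have : (0:ℝ) ≤ ∑ i, ∑ j, |A i j| :=
      Finset.sum_nonneg fun i _ => Finset.sum_nonneg fun j _ => abs_nonneg _
    linarith
  refine ⟨min 1 c⁻¹, by positivity, min_le_left _ _, fun m hm => ?_⟩
  obtain ⟨i, hi⟩ : ∃ i, m i ≠ 0 := by
    by_contra h; push_neg at h; exact hm (funext h)
  have h2 : A.mulVec (B.mulVec fun k => (m k : ℝ)) = fun k => (m k : ℝ) := by
    rw [Matrix.mulVec_mulVec, hAB, Matrix.one_mulVec]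
  have key : (m i : ℝ) = ∑ j, A i j * latticePoint B m j := by
    conv_lhs => rw [show ((m i : ℝ)) = A.mulVec (B.mulVec fun k => (m k : ℝ)) i by rw [h2]]
    simp [Matrix.mulVec, dotProduct, latticePoint]
  have h1 : (1:ℝ) ≤ |(m i : ℝ)| := by exact_mod_cast Int.one_le_abs hi
  have h3 : |(m i:ℝ)| ≤ c * ‖latticePoint B m‖ := by
    rw [key]
    calc |∑ j, A i j * latticePoint B m j| ≤ ∑ j, |A i j * latticePoint B m j| :=
          Finset.abs_sum_le_sum_abs _ _
    _ = ∑ j, |A i j| * |latticePoint B m j| := by simp [abs_mul]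
    _ ≤ ∑ j, |A i j| * ‖latticePoint B m‖ := Finset.sum_le_sum fun j _ =>
          mul_le_mul_of_nonneg_left (abs_apply_le_norm _ j) (abs_nonneg _)
    _ = (∑ j, |A i j|) * ‖latticePoint B m‖ := (Finset.sum_mul _ _ _).symm
    _ ≤ c * ‖latticePoint B m‖ := by
          apply mul_le_mul_of_nonneg_right _ (norm_nonneg _)
          have : (∑ j, |A i j|) ≤ ∑ i', ∑ j, |A i' j| :=
            Finset.single_le_sum (f := fun i' => ∑ j, |A i' j|)
              (fun i' _ => Finset.sum_nonneg fun j _ => abs_nonneg _) (Finset.mem_univ i)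
          linarith
  have h4 : (1:ℝ) ≤ c * ‖latticePoint B m‖ := h1.trans h3
  have h5 : c⁻¹ ≤ ‖latticePoint B m‖ := by
    rw [inv_eq_one_div, div_le_iff₀ hc0]
    nlinarith
  exact le_trans (min_le_right _ _) h5

private lemma pow_sub_pow_le {x y : ℝ} (hy : 0 ≤ y) (hxy : y ≤ x) (n : ℕ) :
    x ^ (n+1) - y ^ (n+1) ≤ ((n:ℝ)+1) * x ^ n * (x - y) := by
  induction n with
  | zero => simp
  | succ n ih =>
    have hx : 0 ≤ x := hy.trans hxy
    have hyx : y ^ (n+1) ≤ x ^ (n+1) := pow_le_pow_left₀ hy hxy _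
    have step : x ^ (n+2) - y ^ (n+2) = x * (x^(n+1) - y^(n+1)) + y^(n+1) * (x - y) := by ring
    have h1 : x * (x^(n+1) - y^(n+1)) ≤ x * (((n:ℝ)+1) * x^n * (x-y)) :=
      mul_le_mul_of_nonneg_left ih hx
    have h2 : y^(n+1) * (x - y) ≤ x^(n+1) * (x - y) :=
      mul_le_mul_of_nonneg_right hyx (by linarith)
    have : x ^ (n+2) - y ^ (n+2) ≤ x * (((n:ℝ)+1) * x^n * (x-y)) + x^(n+1) * (x - y) := by
      rw [step]; exact add_le_add h1 h2
    calc x ^ (n+2) - y ^ (n+2) ≤ x * (((n:ℝ)+1) * x^n * (x-y)) + x^(n+1) * (x - y) := this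
    _ = ((n:ℝ)+1+1) * x^(n+1) * (x-y) := by ring
    _ = ((n+1:ℕ)+(1:ℝ)) * x^(n+1) * (x-y) := by push_cast; ring

private lemma sum_inv_sq {t : ℝ} (ht : 1 ≤ t) (N : ℕ) :
    ∑ n ∈ Finset.range N, ((t + n)^2)⁻¹ ≤ 2 / t := by
  have ht0 : 0 < t := by linarith
  have key : ∀ N : ℕ, ∑ n ∈ Finset.range (N+1), ((t+n)^2)⁻¹ ≤ (t^2)⁻¹ + (t⁻¹ - (t+N)⁻¹) := by
    intro N
    induction N with
    | zero => simp
    | succ N ih =>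
      rw [Finset.sum_range_succ]
      have h1 : (0:ℝ) < t + N := by positivity
      have h2 : (0:ℝ) < t + ((N:ℝ)+1) := by positivity
      have key2 : ((t + ((N:ℝ)+1))^2)⁻¹ ≤ (t+N)⁻¹ - (t+((N:ℝ)+1))⁻¹ := by
        have he : (t+(N:ℝ))⁻¹ - (t+((N:ℝ)+1))⁻¹ = ((t+(N:ℝ)) * (t+((N:ℝ)+1)))⁻¹ := by
          field_simp
          ring
        rw [he]
        have hle : (t+(N:ℝ)) * (t+((N:ℝ)+1)) ≤ (t + ((N:ℝ)+1))^2 := by nlinarith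
        exact inv_anti₀ (by positivity) hle
      push_cast
      push_cast at ih
      linarith
  cases N with
  | zero => simp; positivity
  | succ N =>
    have hk := key N
    have h2 : (0:ℝ) < t + N := by positivity
    have e1 : (t^2)⁻¹ ≤ t⁻¹ := by
      apply inv_anti₀ ht0
      nlinarith
    have e2 : (0:ℝ) < (t+N)⁻¹ := by positivity
    rw [div_eq_mul_inv]
    linarith

private lemma sum_inv_le_log {a : ℝ} (ha : 1 < a) (N : ℕ) :
    ∑ n ∈ Finset.range (N+1), (a + n)⁻¹ ≤ 1 + (Real.log (a + N) - Real.log a) := by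
  have ha0 : 0 < a := by linarith
  induction N with
  | zero => simpa using inv_le_one_of_one_le₀ ha.le
  | succ N ih =>
    rw [Finset.sum_range_succ]
    have h1 : (0:ℝ) < a + N := by positivity
    have h2 : (0:ℝ) < a + ((N:ℝ)+1) := by positivity
    have key : (a + ((N:ℝ)+1))⁻¹ ≤ Real.log (a + ((N:ℝ)+1)) - Real.log (a+(N:ℝ)) := by
      have hlog : Real.log ((a+(N:ℝ))/(a+((N:ℝ)+1))) ≤ (a+(N:ℝ))/(a+((N:ℝ)+1)) - 1 :=
        Real.log_le_sub_one_of_pos (by positivity)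
      rw [Real.log_div h1.ne' h2.ne'] at hlog
      have he : (a+(N:ℝ))/(a+((N:ℝ)+1)) - 1 = -(a+((N:ℝ)+1))⁻¹ := by
        field_simp
        ring
      rw [he] at hlog
      linarith
    push_cast
    push_cast at ih
    linarith

private lemma shell_count {d : ℕ} (hd : 2 ≤ d) (B : Matrix (Fin d) (Fin d) ℝ)
    (hB : IsUnit B.det) :
    ∃ K : ℝ, 0 < K ∧ ∀ (c : EuclideanSpace ℝ (Fin d)) (R : ℝ), 0 ≤ R →
      ∀ S : Finset (Fin d → ℤ),
        (∀ m ∈ S, R ≤ ‖latticePoint B m - c‖ ∧ ‖latticePoint B m - c‖ ≤ R + 1) →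
        (S.card : ℝ) ≤ K * (R + 1) ^ (d - 1) := by
  obtain ⟨r, hr0, hr1, hsep⟩ := lattice_norm_lb B hB
  haveI : Nonempty (Fin d) := ⟨⟨0, by omega⟩⟩
  set ρ := r / 2 with hρ
  have hρ0 : 0 < ρ := by positivity
  have hρ1 : ρ ≤ 1/2 := by rw [hρ]; linarith
  have hd0 : d ≠ 0 := by omega
  set V : ℝ≥0∞ := volume (Metric.ball (0 : EuclideanSpace ℝ (Fin d)) 1) with hV
  have hV0 : V ≠ 0 := (Metric.measure_ball_pos _ _ one_pos).ne'
  have hVtop : V ≠ ⊤ := measure_ball_lt_top.ne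
  have hrank : Module.finrank ℝ (EuclideanSpace ℝ (Fin d)) = d := finrank_euclideanSpace_fin
  refine ⟨2 * d * (3/2)^(d-1) / ρ^d, by positivity, fun c R hR S hS => ?_⟩
  set x := R + 1 + ρ with hx
  set y' := max (R - ρ) 0 with hy'
  have hy'0 : 0 ≤ y' := le_max_right _ _
  have hx0 : 0 < x := by rw [hx]; linarith
  have hy'x : y' ≤ x := by
    rcases le_or_gt (R - ρ) 0 with h | h
    · rw [hy', max_eq_right h, hx]; linarith
    · rw [hy', max_eq_left h.le, hx]; linarith
  have hxy2 : x - y' ≤ 2 := by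
    rcases le_or_gt (R - ρ) 0 with h | h
    · rw [hy', max_eq_right h, hx]; linarith
    · rw [hy', max_eq_left h.le, hx]; linarith
  -- pairwise disjoint balls
  have hdisj : (↑S : Set (Fin d → ℤ)).PairwiseDisjoint
      (fun m => Metric.ball (latticePoint B m) ρ) := by
    intro m _ m' _ hne
    apply Metric.ball_disjoint_ball
    have h : r ≤ ‖latticePoint B m - latticePoint B m'‖ := by
      rw [latticePoint_sub]
      exact hsep _ (sub_ne_zero_of_ne hne)
    rw [dist_eq_norm]
    linarith
  -- each ball sits in closedBall c x minus ball c (R - ρ)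
  have hsub : ∀ m ∈ S, Metric.ball (latticePoint B m) ρ ⊆
      Metric.closedBall c x \ Metric.ball c (R - ρ) := by
    intro m hm z hz
    rw [Metric.mem_ball] at hz
    have hd1 : dist (latticePoint B m) c = ‖latticePoint B m - c‖ := dist_eq_norm _ _
    have h1 := (hS m hm).1
    have h2 := (hS m hm).2
    have ht1 := dist_triangle z (latticePoint B m) c
    have ht2 := dist_triangle (latticePoint B m) z c
    rw [hd1] at ht1
    rw [dist_comm (latticePoint B m) z, hd1] at ht2
    constructor
    · rw [Metric.mem_closedBall]
      rw [hx]; linarith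
    · intro hmem
      rw [Metric.mem_ball] at hmem
      linarith
  -- volume of the union
  have hvol_union : volume (⋃ m ∈ S, Metric.ball (latticePoint B m) ρ) =
      (S.card : ℝ≥0∞) * (ENNReal.ofReal (ρ^d) * V) := by
    rw [measure_biUnion_finset hdisj (fun m _ => measurableSet_ball)]
    have : ∀ m ∈ S, volume (Metric.ball (latticePoint B m) ρ)
        = ENNReal.ofReal (ρ^d) * V := by
      intro m _
      rw [Measure.addHaar_ball _ _ hρ0.le, hrank]
    rw [Finset.sum_congr rfl this, Finset.sum_const, nsmul_eq_mul]
  have hvol_small : volume (Metric.ball c (R - ρ)) = ENNReal.ofReal (y'^d) * V := by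
    rcases le_or_gt (R - ρ) 0 with h | h
    · rw [Metric.ball_eq_empty.2 h, measure_empty, hy', max_eq_right h, zero_pow hd0,
        ENNReal.ofReal_zero, zero_mul]
    · rw [hy', max_eq_left h.le, Measure.addHaar_ball _ _ h.le, hrank]
  have hvol_big : volume (Metric.closedBall c x) = ENNReal.ofReal (x^d) * V := by
    rw [Measure.addHaar_closedBall _ _ hx0.le, hrank]
  -- disjointness of the union from the small ball and inclusion in the big ball
  have hU : (⋃ m ∈ S, Metric.ball (latticePoint B m) ρ) ∪ Metric.ball c (R - ρ)
      ⊆ Metric.closedBall c x := by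
    apply Set.union_subset
    · exact Set.iUnion₂_subset fun m hm => (hsub m hm).trans Set.diff_subset
    · intro z hz
      rw [Metric.mem_ball] at hz
      rw [Metric.mem_closedBall]
      have : dist z c < R - ρ := hz
      rw [hx]; linarith
  have hUdisj : Disjoint (⋃ m ∈ S, Metric.ball (latticePoint B m) ρ)
      (Metric.ball c (R - ρ)) := by
    rw [Set.disjoint_left]
    intro z hz hz'
    obtain ⟨_, ⟨m, rfl⟩, _, ⟨hm, rfl⟩, hzm⟩ := hz
    exact ((hsub m hm hzm).2 hz')
  have hkey : (S.card : ℝ≥0∞) * ENNReal.ofReal (ρ^d) * V + ENNReal.ofReal (y'^d) * V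
      ≤ ENNReal.ofReal (x^d) * V := by
    calc (S.card : ℝ≥0∞) * ENNReal.ofReal (ρ^d) * V + ENNReal.ofReal (y'^d) * V
        = volume ((⋃ m ∈ S, Metric.ball (latticePoint B m) ρ) ∪ Metric.ball c (R - ρ)) := by
          rw [measure_union hUdisj measurableSet_ball, hvol_union, hvol_small, mul_assoc]
    _ ≤ volume (Metric.closedBall c x) := measure_mono hU
    _ = ENNReal.ofReal (x^d) * V := hvol_big
  -- cancel V and convert to a real inequality
  have hkey2 : (S.card : ℝ) * ρ^d + y'^d ≤ x^d := by
    have h1 : ((S.card : ℝ≥0∞) * ENNReal.ofReal (ρ^d) + ENNReal.ofReal (y'^d)) * V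
        ≤ ENNReal.ofReal (x^d) * V := by
      rw [add_mul]; exact hkey
    rw [ENNReal.mul_le_mul_iff_left hV0 hVtop] at h1
    have h2 : (S.card : ℝ≥0∞) * ENNReal.ofReal (ρ^d) + ENNReal.ofReal (y'^d)
        = ENNReal.ofReal ((S.card : ℝ) * ρ^d + y'^d) := by
      rw [ENNReal.ofReal_add (by positivity) (by positivity),
        ENNReal.ofReal_mul (by positivity), ENNReal.ofReal_natCast]
    rw [h2] at h1
    exact (ENNReal.ofReal_le_ofReal_iff (by positivity)).1 h1
  -- real arithmetic conclusion
  have hpow : x^d - y'^d ≤ (d:ℝ) * x^(d-1) * (x - y') := by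
    have hd1 : d = (d-1) + 1 := by omega
    have := pow_sub_pow_le hy'0 hy'x (d-1)
    rw [← hd1] at this
    have hc : ((d-1:ℕ):ℝ) + 1 = (d:ℝ) := by
      rw [Nat.cast_sub (by omega : 1 ≤ d)]; push_cast; ring
    rw [hc] at this
    exact this
  have hxle : x^(d-1) ≤ (3/2)^(d-1) * (R+1)^(d-1) := by
    rw [← mul_pow]
    apply pow_le_pow_left₀ hx0.le
    rw [hx]; nlinarith
  have hfinal : (S.card : ℝ) * ρ^d ≤ 2 * d * (3/2)^(d-1) * (R+1)^(d-1) := by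
    have h3 : (S.card : ℝ) * ρ^d ≤ x^d - y'^d := by nlinarith [pow_nonneg hy'0 d]
    have h4 : (d:ℝ) * x^(d-1) * (x - y') ≤ (d:ℝ) * ((3/2)^(d-1) * (R+1)^(d-1)) * 2 := by
      have hxnn : (0:ℝ) ≤ x^(d-1) := by positivity
      have hd2 : (0:ℝ) ≤ (d:ℝ) := by positivity
      have hxy0 : 0 ≤ x - y' := by linarith
      calc (d:ℝ) * x^(d-1) * (x - y') ≤ (d:ℝ) * x^(d-1) * 2 :=
            mul_le_mul_of_nonneg_left hxy2 (by positivity)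
      _ ≤ (d:ℝ) * ((3/2)^(d-1) * (R+1)^(d-1)) * 2 := by
            apply mul_le_mul_of_nonneg_right _ (by norm_num)
            exact mul_le_mul_of_nonneg_left hxle hd2
    calc (S.card : ℝ) * ρ^d ≤ x^d - y'^d := h3
    _ ≤ (d:ℝ) * x^(d-1) * (x - y') := hpow
    _ ≤ (d:ℝ) * ((3/2)^(d-1) * (R+1)^(d-1)) * 2 := h4
    _ = 2 * d * (3/2)^(d-1) * (R+1)^(d-1) := by ring
  have hρd : (0:ℝ) < ρ^d := by positivity
  calc (S.card : ℝ) = (S.card : ℝ) * ρ^d / ρ^d := by field_simp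
  _ ≤ 2 * d * (3/2)^(d-1) * (R+1)^(d-1) / ρ^d := by
      gcongr
  _ = 2 * d * (3/2)^(d-1) / ρ^d * (R+1)^(d-1) := by ring

private lemma tail_sum {d : ℕ} (hd : 2 ≤ d) (B : Matrix (Fin d) (Fin d) ℝ)
    (hB : IsUnit B.det) :
    ∃ Ct : ℝ, 0 < Ct ∧ ∀ (c : EuclideanSpace ℝ (Fin d)) (t : ℝ), 1 ≤ t →
      ∀ T : Finset (Fin d → ℤ), (∀ m ∈ T, t ≤ ‖latticePoint B m - c‖) →
        ∑ m ∈ T, (‖latticePoint B m - c‖ ^ (d + 1))⁻¹ ≤ Ct / t := by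
  obtain ⟨K, hK0, hK⟩ := shell_count hd B hB
  refine ⟨K * 2^(d-1) * 2, by positivity, fun c t ht T hT => ?_⟩
  set g : (Fin d → ℤ) → ℕ := fun m => ⌊‖latticePoint B m - c‖ - t⌋₊ with hg
  set N := T.sup g + 1 with hN
  have hmaps : ∀ m ∈ T, g m ∈ Finset.range N := fun m hm =>
    Finset.mem_range.2 (Nat.lt_succ_of_le (Finset.le_sup hm))
  rw [← Finset.sum_fiberwise_of_maps_to hmaps]
  have step : ∀ n ∈ Finset.range N,
      ∑ m ∈ T.filter (fun m => g m = n), (‖latticePoint B m - c‖ ^ (d+1))⁻¹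
        ≤ K * 2^(d-1) * ((t + n)^2)⁻¹ := by
    intro n _
    set F := T.filter (fun m => g m = n) with hF
    have hmem : ∀ m ∈ F, t + n ≤ ‖latticePoint B m - c‖ ∧
        ‖latticePoint B m - c‖ ≤ (t + n) + 1 := by
      intro m hm
      obtain ⟨hmT, hgm⟩ := Finset.mem_filter.1 hm
      have h0 : 0 ≤ ‖latticePoint B m - c‖ - t := sub_nonneg.2 (hT m hmT)
      constructor
      · have h := Nat.floor_le h0
        rw [show ⌊‖latticePoint B m - c‖ - t⌋₊ = g m from rfl, hgm] at h
        linarith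
      · have h := Nat.lt_floor_add_one (‖latticePoint B m - c‖ - t)
        rw [show ⌊‖latticePoint B m - c‖ - t⌋₊ = g m from rfl, hgm] at h
        linarith
    have htn0 : (0:ℝ) < t + n := by positivity
    have htn1 : (1:ℝ) ≤ t + n := le_add_of_le_of_nonneg ht (by positivity)
    have hcard : (F.card : ℝ) ≤ K * (t + n + 1)^(d-1) :=
      hK c (t + n) (by positivity) F hmem
    have hterm : ∀ m ∈ F, (‖latticePoint B m - c‖ ^ (d+1))⁻¹ ≤ ((t+n) ^ (d+1))⁻¹ := by
      intro m hm
      have h1 := (hmem m hm).1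
      gcongr
    have e2 : (t+n)^(d+1) = (t+n)^(d-1) * (t+n)^2 := by
      rw [← pow_add]; congr 1; omega
    calc ∑ m ∈ F, (‖latticePoint B m - c‖ ^ (d+1))⁻¹
        ≤ ∑ _m ∈ F, ((t+n)^(d+1))⁻¹ := Finset.sum_le_sum hterm
    _ = (F.card : ℝ) * ((t+n)^(d+1))⁻¹ := by rw [Finset.sum_const, nsmul_eq_mul]
    _ ≤ K * (t+n+1)^(d-1) * ((t+n)^(d+1))⁻¹ := by gcongr
    _ ≤ K * (2*(t+n))^(d-1) * ((t+n)^(d+1))⁻¹ := by gcongr; linarith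
    _ = K * 2^(d-1) * ((t+n)^(d-1) * ((t+n)^(d+1))⁻¹) := by rw [mul_pow]; ring
    _ = K * 2^(d-1) * ((t+n)^2)⁻¹ := by
        rw [e2, mul_inv, ← mul_assoc ((t+n)^(d-1)), mul_inv_cancel₀ (by positivity), one_mul]
  calc ∑ n ∈ Finset.range N, ∑ m ∈ T.filter (fun m => g m = n),
        (‖latticePoint B m - c‖ ^ (d+1))⁻¹
      ≤ ∑ n ∈ Finset.range N, K * 2^(d-1) * ((t + n)^2)⁻¹ := Finset.sum_le_sum step
  _ = K * 2^(d-1) * ∑ n ∈ Finset.range N, ((t + n)^2)⁻¹ := by rw [← Finset.mul_sum]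
  _ ≤ K * 2^(d-1) * (2 / t) := by
      have := sum_inv_sq ht N
      gcongr
  _ = K * 2^(d-1) * 2 / t := by ring

private lemma main_finsum {d : ℕ} (hd : 2 ≤ d) (B : Matrix (Fin d) (Fin d) ℝ)
    (hB : IsUnit B.det) :
    ∃ C : ℝ, 0 < C ∧ ∀ M a : ℝ, 0 < M → 1 < a → a < M →
      ∀ S : Finset ((Fin d → ℤ) × (Fin d → ℤ)),
        (∀ p ∈ S, (M / 2 < ‖latticePoint B p.1‖ ∧ ‖latticePoint B p.1‖ < M) ∧
          (M + a ≤ ‖latticePoint B p.2‖ ∧ ‖latticePoint B p.2‖ < 2 * M)) →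
        ∑ p ∈ S, (‖latticePoint B p.2 - latticePoint B p.1‖ ^ (d + 1))⁻¹
          ≤ C * M ^ (d - 1) * Real.log ((a + M / 2) / a) := by
  obtain ⟨K, hK0, hK⟩ := shell_count hd B hB
  obtain ⟨Ct, hCt0, hCt⟩ := tail_sum hd B hB
  have hl32 : 0 < Real.log (3/2) := Real.log_pos (by norm_num)
  refine ⟨K * Ct * (1/Real.log (3/2) + 1),
    mul_pos (mul_pos hK0 hCt0) (by positivity), fun M a hM ha haM S hS => ?_⟩
  have ha0 : (0:ℝ) < a := by linarith
  have hM1 : (1:ℝ) < M := lt_trans ha haM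
  set S₁ := S.image Prod.fst with hS₁def
  set S₂ := S.image Prod.snd with hS₂def
  have hS₁ : ∀ m' ∈ S₁, M/2 < ‖latticePoint B m'‖ ∧ ‖latticePoint B m'‖ < M := by
    intro m' hm'
    obtain ⟨p, hp, rfl⟩ := Finset.mem_image.1 hm'
    exact (hS p hp).1
  have hS₂ : ∀ m ∈ S₂, M + a ≤ ‖latticePoint B m‖ ∧ ‖latticePoint B m‖ < 2*M := by
    intro m hm
    obtain ⟨p, hp, rfl⟩ := Finset.mem_image.1 hm
    exact (hS p hp).2
  have hsub : S ⊆ S₁ ×ˢ S₂ := fun p hp =>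
    Finset.mem_product.2 ⟨Finset.mem_image_of_mem _ hp, Finset.mem_image_of_mem _ hp⟩
  -- log facts
  have hrat : (3/2 : ℝ) ≤ (a + M/2)/a := by
    rw [le_div_iff₀ ha0]; linarith
  have hlogX : Real.log (3/2) ≤ Real.log ((a + M/2)/a) :=
    Real.log_le_log (by norm_num) hrat
  have hlogX0 : 0 < Real.log ((a + M/2)/a) := lt_of_lt_of_le hl32 hlogX
  -- the shell index
  set k' : (Fin d → ℤ) → ℕ := fun m' => ⌊M - ‖latticePoint B m'‖⌋₊ with hk'
  have hinner : ∀ m' ∈ S₁,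
      ∑ m ∈ S₂, (‖latticePoint B m - latticePoint B m'‖ ^ (d+1))⁻¹
        ≤ Ct / (a + k' m') := by
    intro m' hm'
    obtain ⟨h1, h2⟩ := hS₁ m' hm'
    have hfl : (k' m' : ℝ) ≤ M - ‖latticePoint B m'‖ := Nat.floor_le (by linarith)
    apply hCt (latticePoint B m') (a + k' m')
      (by have : (0:ℝ) ≤ (k' m' : ℝ) := Nat.cast_nonneg _; linarith)
    intro m hm
    obtain ⟨h3, h4⟩ := hS₂ m hm
    have h5 : ‖latticePoint B m‖ - ‖latticePoint B m'‖ ≤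
        ‖latticePoint B m - latticePoint B m'‖ := norm_sub_norm_le _ _
    linarith
  have houter : ∀ m' ∈ S₁, k' m' ∈ Finset.range (⌊M/2⌋₊ + 1) := by
    intro m' hm'
    obtain ⟨h1, h2⟩ := hS₁ m' hm'
    refine Finset.mem_range.2 (Nat.lt_succ_of_le ?_)
    exact Nat.floor_le_floor (by linarith)
  -- fiber cardinality bound
  have hfibcard : ∀ n : ℕ, ((S₁.filter (fun m' => k' m' = n)).card : ℝ) ≤ K * M^(d-1) := by
    intro n
    set R := max (M - n - 1) 0 with hR
    have hR0 : 0 ≤ R := le_max_right _ _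
    have hcond : ∀ m' ∈ S₁.filter (fun m' => k' m' = n),
        R ≤ ‖latticePoint B m' - 0‖ ∧ ‖latticePoint B m' - 0‖ ≤ R + 1 := by
      intro m' hm'
      obtain ⟨hm'S, hkm'⟩ := Finset.mem_filter.1 hm'
      obtain ⟨h1, h2⟩ := hS₁ m' hm'S
      rw [sub_zero]
      have hfl : (n:ℝ) ≤ M - ‖latticePoint B m'‖ := by
        have := Nat.floor_le (by linarith : (0:ℝ) ≤ M - ‖latticePoint B m'‖)
        rw [show ⌊M - ‖latticePoint B m'‖⌋₊ = k' m' from rfl, hkm'] at this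
        exact this
      have hfu : M - ‖latticePoint B m'‖ < (n:ℝ) + 1 := by
        have := Nat.lt_floor_add_one (M - ‖latticePoint B m'‖)
        rw [show ⌊M - ‖latticePoint B m'‖⌋₊ = k' m' from rfl, hkm'] at this
        exact_mod_cast this
      constructor
      · exact max_le (by linarith) (norm_nonneg _)
      · have : M - n ≤ R + 1 := by
          have := le_max_left (M - n - 1) 0
          linarith [this]
        linarith
    have := hK 0 R hR0 _ hcond
    refine this.trans ?_
    have hRM : R + 1 ≤ M := by
      rcases le_or_gt (M - n - 1) 0 with h | h
      · rw [hR, max_eq_right h]; linarith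
      · rw [hR, max_eq_left h.le]
        have : (0:ℝ) ≤ (n:ℝ) := Nat.cast_nonneg _
        linarith
    exact mul_le_mul_of_nonneg_left (pow_le_pow_left₀ (by positivity) hRM _) hK0.le
  -- put it together
  calc ∑ p ∈ S, (‖latticePoint B p.2 - latticePoint B p.1‖ ^ (d + 1))⁻¹
      ≤ ∑ p ∈ S₁ ×ˢ S₂, (‖latticePoint B p.2 - latticePoint B p.1‖ ^ (d + 1))⁻¹ :=
        Finset.sum_le_sum_of_subset_of_nonneg hsub (fun p _ _ => by positivity)
  _ = ∑ m' ∈ S₁, ∑ m ∈ S₂, (‖latticePoint B m - latticePoint B m'‖ ^ (d + 1))⁻¹ :=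
        Finset.sum_product _ _ _
  _ ≤ ∑ m' ∈ S₁, Ct / (a + k' m') := Finset.sum_le_sum hinner
  _ = ∑ n ∈ Finset.range (⌊M/2⌋₊ + 1), ∑ m' ∈ S₁.filter (fun m' => k' m' = n),
        Ct / (a + k' m') := (Finset.sum_fiberwise_of_maps_to houter _).symm
  _ = ∑ n ∈ Finset.range (⌊M/2⌋₊ + 1),
        ((S₁.filter (fun m' => k' m' = n)).card : ℝ) * (Ct / (a + n)) := by
        refine Finset.sum_congr rfl fun n _ => ?_
        rw [Finset.sum_congr rfl (fun m' hm' => ?_), Finset.sum_const, nsmul_eq_mul]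
        rw [(Finset.mem_filter.1 hm').2]
  _ ≤ ∑ n ∈ Finset.range (⌊M/2⌋₊ + 1), K * M^(d-1) * (Ct / (a + n)) := by
        refine Finset.sum_le_sum fun n _ => ?_
        have hpos : (0:ℝ) < Ct / (a + n) := by positivity
        exact mul_le_mul_of_nonneg_right (hfibcard n) hpos.le
  _ = K * M^(d-1) * Ct * ∑ n ∈ Finset.range (⌊M/2⌋₊ + 1), (a + n)⁻¹ := by
        rw [Finset.mul_sum]
        refine Finset.sum_congr rfl fun n _ => ?_
        rw [div_eq_mul_inv]; ring
  _ ≤ K * M^(d-1) * Ct * (1 + (Real.log (a + ⌊M/2⌋₊) - Real.log a)) := by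
        have := sum_inv_le_log ha ⌊M/2⌋₊
        gcongr
  _ ≤ K * M^(d-1) * Ct * (1 + Real.log ((a + M/2)/a)) := by
        have h1 : Real.log (a + ⌊M/2⌋₊) ≤ Real.log (a + M/2) := by
          apply Real.log_le_log (by positivity)
          have := Nat.floor_le (by positivity : (0:ℝ) ≤ M/2)
          linarith
        have h2 : Real.log ((a + M/2)/a) = Real.log (a + M/2) - Real.log a :=
          Real.log_div (by linarith) ha0.ne'
        gcongr
        rw [h2]; linarith
  _ ≤ K * Ct * (1/Real.log (3/2) + 1) * M^(d-1) * Real.log ((a + M/2)/a) := by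
        have hone : (1:ℝ) ≤ (1/Real.log (3/2)) * Real.log ((a + M/2)/a) := by
          rw [one_div, mul_comm, ← div_eq_mul_inv, le_div_iff₀ hl32]
          linarith
        have hMd : (0:ℝ) ≤ M^(d-1) := by positivity
        have base : 1 + Real.log ((a + M/2)/a)
            ≤ (1/Real.log (3/2) + 1) * Real.log ((a + M/2)/a) := by
          rw [add_mul, one_mul]
          linarith
        calc K * M^(d-1) * Ct * (1 + Real.log ((a + M/2)/a))
            ≤ K * M^(d-1) * Ct * ((1/Real.log (3/2) + 1) * Real.log ((a + M/2)/a)) := by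
              apply mul_le_mul_of_nonneg_left base (by positivity)
        _ = K * Ct * (1/Real.log (3/2) + 1) * M^(d-1) * Real.log ((a + M/2)/a) := by ring

/-- For a full-rank lattice `Λ* = B ℤ^d` in `ℝ^d`, `d ≥ 2`, `M > 0` and `a > 1`, the double sum
over lattice points `w'` with `M/2 < ‖w'‖ < M` and `w` with `M + a ≤ ‖w‖ < 2M` of
`‖w - w'‖^{-(d+1)}` is `≤ C · M^{d-1} · log((a + M/2)/a)`, with `C` depending only on the
lattice and `d`. -/
theorem lattice_double_sum_annulus (d : ℕ) (hd : 2 ≤ d)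
    (B : Matrix (Fin d) (Fin d) ℝ) (hB : IsUnit B.det) :
    ∃ C > 0, ∀ M a : ℝ, 0 < M → 1 < a →
      (∑' p : {p : (Fin d → ℤ) × (Fin d → ℤ) //
          (M / 2 < ‖latticePoint B p.1‖ ∧ ‖latticePoint B p.1‖ < M) ∧
          (M + a ≤ ‖latticePoint B p.2‖ ∧ ‖latticePoint B p.2‖ < 2 * M)},
        (‖latticePoint B p.1.2 - latticePoint B p.1.1‖ ^ (d + 1))⁻¹)
      ≤ C * M ^ (d - 1) * Real.log ((a + M / 2) / a) := by
  obtain ⟨C, hC0, hC⟩ := main_finsum hd B hB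
  refine ⟨C, hC0, fun M a hM ha => ?_⟩
  have ha0 : (0:ℝ) < a := by linarith
  have hrat : (1:ℝ) ≤ (a + M/2)/a := by
    rw [le_div_iff₀ ha0]; linarith
  have hlog0 : 0 ≤ Real.log ((a + M/2)/a) := Real.log_nonneg hrat
  have hRHS : 0 ≤ C * M^(d-1) * Real.log ((a + M/2)/a) :=
    mul_nonneg (mul_nonneg hC0.le (by positivity)) hlog0
  by_cases haM : a < M
  · apply tsum_le_of_sum_le' hRHS
    intro s
    have hcond : ∀ q ∈ s.image Subtype.val,
        (M / 2 < ‖latticePoint B q.1‖ ∧ ‖latticePoint B q.1‖ < M) ∧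
        (M + a ≤ ‖latticePoint B q.2‖ ∧ ‖latticePoint B q.2‖ < 2 * M) := by
      intro q hq
      obtain ⟨p, _, rfl⟩ := Finset.mem_image.1 hq
      exact p.2
    have := hC M a hM ha haM (s.image Subtype.val) hcond
    rwa [Finset.sum_image (fun x _ y _ h => Subtype.val_injective h)] at this
  · haveI : IsEmpty {p : (Fin d → ℤ) × (Fin d → ℤ) //
        (M / 2 < ‖latticePoint B p.1‖ ∧ ‖latticePoint B p.1‖ < M) ∧
        (M + a ≤ ‖latticePoint B p.2‖ ∧ ‖latticePoint B p.2‖ < 2 * M)} := by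
      refine ⟨fun p => ?_⟩
      obtain ⟨p, ⟨_, h2⟩⟩ := p
      have := not_lt.1 haM
      linarith [h2.1, h2.2]
    rw [tsum_empty]
    exact hRHS

end
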